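/- In a PET, the image of the assert map of a sharp effect p equals p: im(asrt_p) = p. -/
import Mathlib


universe u v

/-- An effect algebra: a set with a partially defined commutative associative
addition (encoded via `Option`), a zero, a one, such that `x + 0 = x`,
`x + 1` defined implies `x = 0`, and every element has a unique complement. -/
structure EffectAlgebra (E : Type u) where
  add : E → E → Option E
  zero : E
  one : E
  add_comm' : ∀ x y, add x y = add y x
  add_assoc' : ∀ x y z xy xyz, add x y = some xy → add xy z = some xyz →
      ∃ yz, add y z = some yz ∧ add x yz = some xyz
  add_zero' : ∀ x, add x zero = some x
  one_max : ∀ x y, add x one = some y → x = zero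
  compl_exists : ∀ x, ∃ y, add x y = some one
  compl_unique : ∀ x y₁ y₂, add x y₁ = some one → add x y₂ = some one → y₁ = y₂

namespace EffectAlgebra

variable {E : Type u} (a : EffectAlgebra E)

/-- The natural order: `x ≤ y` iff there is `z` with `x + z = y`. -/
def le (x y : E) : Prop := ∃ z, a.add x z = some y

/-- The complement `x⊥`: the unique element with `x + x⊥ = 1`. -/
noncomputable def compl (x : E) : E := Classical.choose (a.compl_exists x)

theorem compl_spec (x : E) : a.add x (a.compl x) = some a.one :=
  Classical.choose_spec (a.compl_exists x)

end EffectAlgebra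

open CategoryTheory

/-- An effect theory: a category with a designated trivial system `I` such
that each `Eff(A) := Hom(A, I)` is an effect algebra and precomposition
preserves zero and partial sums. -/
structure EffectTheory (C : Type u) [Category.{v} C] where
  I : C
  ea : ∀ A : C, EffectAlgebra (A ⟶ I)
  comp_zero : ∀ {A B : C} (g : B ⟶ A), g ≫ (ea A).zero = (ea B).zero
  comp_add : ∀ {A B : C} (g : B ⟶ A) (p q s : A ⟶ I),
      (ea A).add p q = some s → (ea B).add (g ≫ p) (g ≫ q) = some (g ≫ s)

namespace EffectTheory

variable {C : Type u} [Category.{v} C] (E : EffectTheory C)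

/-- `q` is the image of `f`: the least effect with `q ∘ f = 1 ∘ f`. -/
def IsImage {A B : C} (f : A ⟶ B) (q : B ⟶ E.I) : Prop :=
  f ≫ q = f ≫ (E.ea B).one ∧
    ∀ r : B ⟶ E.I, f ≫ r = f ≫ (E.ea B).one → (E.ea B).le q r

/-- An effect is sharp when it is the image of some map. -/
def Sharp {A : C} (q : A ⟶ E.I) : Prop := ∃ (B : C) (f : B ⟶ A), E.IsImage f q

/-- `π` is a compression for the effect `q`: `1 ∘ π = q ∘ π`, and `π` is final
with this property. -/
def IsCompression {B A : C} (π : B ⟶ A) (q : A ⟶ E.I) : Prop :=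
  π ≫ (E.ea A).one = π ≫ q ∧
    ∀ {D : C} (f : D ⟶ A), f ≫ (E.ea A).one = f ≫ q → ∃! g : D ⟶ B, f = g ≫ π

/-- `ξ` is a filter for the effect `q`: `1 ∘ ξ ≤ q`, and `ξ` is initial with
this property. -/
def IsFilter {A B : C} (ξ : A ⟶ B) (q : A ⟶ E.I) : Prop :=
  (E.ea A).le (ξ ≫ (E.ea B).one) q ∧
    ∀ {D : C} (f : A ⟶ D), (E.ea A).le (f ≫ (E.ea D).one) q → ∃! g : B ⟶ D, f = ξ ≫ g

/-- A map is pure when it is a filter followed by a compression. -/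
def Pure {A B : C} (f : A ⟶ B) : Prop :=
  ∃ (D : C) (q : A ⟶ E.I) (r : B ⟶ E.I) (ξ : A ⟶ D) (π : D ⟶ B),
    E.IsFilter ξ q ∧ E.IsCompression π r ∧ f = ξ ≫ π

end EffectTheory

/-- A pure effect theory (PET): an effect theory in which every effect has a
filter and a compression, every map has an image, the negation of a sharp
effect is sharp, the pure maps form a dagger category, filters and
compressions of sharp effects are adjoint, and compressions of sharp effects
are isometries. -/
structure PET {C : Type u} [Category.{v} C] (E : EffectTheory C) where
  compObj : ∀ {A : C}, (A ⟶ E.I) → C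
  compr : ∀ {A : C} (q : A ⟶ E.I), compObj q ⟶ A
  compr_is : ∀ {A : C} (q : A ⟶ E.I), E.IsCompression (compr q) q
  filtObj : ∀ {A : C}, (A ⟶ E.I) → C
  filt : ∀ {A : C} (q : A ⟶ E.I), A ⟶ filtObj q
  filt_is : ∀ {A : C} (q : A ⟶ E.I), E.IsFilter (filt q) q
  im : ∀ {A B : C}, (A ⟶ B) → (B ⟶ E.I)
  im_is : ∀ {A B : C} (f : A ⟶ B), E.IsImage f (im f)
  dag : ∀ {A B : C}, (A ⟶ B) → (B ⟶ A)
  pure_id : ∀ A : C, E.Pure (𝟙 A)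
  pure_comp : ∀ {A B D : C} (f : A ⟶ B) (g : B ⟶ D), E.Pure f → E.Pure g → E.Pure (f ≫ g)
  pure_dag : ∀ {A B : C} (f : A ⟶ B), E.Pure f → E.Pure (dag f)
  dag_dag : ∀ {A B : C} (f : A ⟶ B), E.Pure f → dag (dag f) = f
  dag_id : ∀ A : C, dag (𝟙 A) = 𝟙 A
  dag_comp : ∀ {A B D : C} (f : A ⟶ B) (g : B ⟶ D), E.Pure f → E.Pure g →
      dag (f ≫ g) = dag g ≫ dag f
  sharp_compl : ∀ {A : C} (q : A ⟶ E.I), E.Sharp q → E.Sharp ((E.ea A).compl q)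
  dag_compr_filt : ∀ {A B : C} (π : B ⟶ A) (q : A ⟶ E.I), E.Sharp q →
      E.IsCompression π q → E.IsFilter (dag π) q
  dag_filt_compr : ∀ {A B : C} (ξ : A ⟶ B) (q : A ⟶ E.I), E.Sharp q →
      E.IsFilter ξ q → E.IsCompression (dag ξ) q
  compr_isometry : ∀ {A B : C} (π : B ⟶ A) (q : A ⟶ E.I), E.Sharp q →
      E.IsCompression π q → π ≫ dag π = 𝟙 B

namespace PET

variable {C : Type u} [Category.{v} C] {E : EffectTheory C} (P : PET E)

/-- The assert map of an effect `p`: `asrt_p := π_p ∘ π_p†`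
(in diagrammatic order, `π_p†` followed by `π_p`). -/
def asrt {A : C} (p : A ⟶ E.I) : A ⟶ A := P.dag (P.compr p) ≫ P.compr p

end PET

section Aux

variable {E : Type u} (a : EffectAlgebra E)

theorem EffectAlgebra.cancel {x b c z : E} (hb : a.add x b = some z)
    (hc : a.add x c = some z) : b = c := by
  obtain ⟨w, hw⟩ := a.compl_exists z
  have hb' : a.add b x = some z := by rw [a.add_comm']; exact hb
  have hc' : a.add c x = some z := by rw [a.add_comm']; exact hc
  obtain ⟨u, hu1, hu2⟩ := a.add_assoc' b x w z a.one hb' hw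
  obtain ⟨u', hu1', hu2'⟩ := a.add_assoc' c x w z a.one hc' hw
  have : u = u' := by rw [hu1] at hu1'; exact Option.some.inj hu1'
  subst this
  exact a.compl_unique u b c (by rw [a.add_comm']; exact hu2)
    (by rw [a.add_comm']; exact hu2')

theorem EffectAlgebra.pos {b c : E} (h : a.add b c = some a.zero) : b = a.zero := by
  have h1 : a.add a.zero a.one = some a.one := by
    rw [a.add_comm']; exact a.add_zero' a.one
  obtain ⟨w, hw1, hw2⟩ := a.add_assoc' b c a.one a.zero a.one h h1
  have hc0 : c = a.zero := a.one_max c w hw1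
  subst hc0
  have := a.add_zero' b
  rw [this] at h
  exact Option.some.inj h

theorem EffectAlgebra.le_antisymm {x y : E} (h1 : a.le x y) (h2 : a.le y x) :
    x = y := by
  obtain ⟨c, hc⟩ := h1
  obtain ⟨d, hd⟩ := h2
  obtain ⟨w, hw1, hw2⟩ := a.add_assoc' x c d y x hc hd
  have hw0 : w = a.zero := a.cancel hw2 (a.add_zero' x)
  have hc0 : c = a.zero := a.pos (hw0 ▸ hw1)
  subst hc0
  rw [a.add_zero' x] at hc
  exact Option.some.inj hc

end Aux

/-- In a PET, the image of the assert map of a sharp effect `p`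
equals `p`. -/
theorem pet_im_asrt {C : Type u} [Category.{v} C] {E : EffectTheory C} (P : PET E)
    {A : C} (p : A ⟶ E.I) (hp : E.Sharp p) :
    P.im (P.asrt p) = p := by
  obtain ⟨hc1, hc2⟩ := P.compr_is p
  have hiso : P.compr p ≫ P.dag (P.compr p) = 𝟙 _ :=
    P.compr_isometry (P.compr p) p hp (P.compr_is p)
  have hasrt1 : P.asrt p ≫ p = P.asrt p ≫ (E.ea A).one := by
    simp only [PET.asrt, Category.assoc, ← hc1]
  have key : ∀ r : A ⟶ E.I, P.asrt p ≫ r = P.asrt p ≫ (E.ea A).one →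
      (E.ea A).le p r := by
    intro r hr
    have hπr : P.compr p ≫ r = P.compr p ≫ (E.ea A).one := by
      calc P.compr p ≫ r = P.compr p ≫ (P.asrt p ≫ r) := by
            simp only [PET.asrt, ← Category.assoc, hiso, Category.id_comp]
        _ = P.compr p ≫ (P.asrt p ≫ (E.ea A).one) := by rw [hr]
        _ = P.compr p ≫ (E.ea A).one := by
            simp only [PET.asrt, ← Category.assoc, hiso, Category.id_comp]
    obtain ⟨B, f, hf1, hf2⟩ := hp
    obtain ⟨g, hg, -⟩ := hc2 f hf1.symm
    have hfr : f ≫ r = f ≫ (E.ea A).one := by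
      rw [hg, Category.assoc, hπr, ← Category.assoc]
    exact hf2 r hfr
  obtain ⟨him1, him2⟩ := P.im_is (P.asrt p)
  exact (E.ea A).le_antisymm (him2 p hasrt1) (key _ him1)
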